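/- Let K = ℚ(α) be a complex cubic number field, where α is an algebraic integer with real conjugate α and complex conjugates α', α'' = conj(α'), and let φ denote the real embedding of K. Let Δ = disc(1, α, α²) ≠ 0, and let η ∈ O_K^× be a fundamental unit with |φ(η)| > 1. Then for every ξ ∈ K with |N_{K/ℚ}(ξ)| = k > 0 there exists a unit ε ∈ O_K^× such that β = ξ·ε satisfies |β·(α'' − α')| ≤ (k·|φ(η)|)^{1/3}·|Δ|^{1/6}, |β'·(α − α'')| ≤ (k·|φ(η)|)^{1/3}·|Δ|^{1/6}, and |β''·(α' − α)| ≤ (k·|φ(η)|)^{1/3}·|Δ|^{1/6}, where β, β', β'' denote the conjugates of β corresponding to α, α', α''. -/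

import Mathlib

open NumberField

/-- In a complex cubic field `K = ℚ(α)` with real embedding `φ`, complex
embedding `ψ` and fundamental unit `η` with `|φ(η)| > 1`, every `ξ ∈ K` of norm
`±k ≠ 0` can be multiplied by a unit `ε` so that `β = ξ ε` satisfies
`|β(α'' - α')|, |β'(α - α'')|, |β''(α' - α)| ≤ (k |φ(η)|)^{1/3} |Δ|^{1/6}`,
where `Δ = disc(1, α, α²)`. -/
theorem stmt_14 (K : Type*) [Field K] [NumberField K]
    (α : K) (hα : IsIntegral ℤ α) (hgen : Algebra.adjoin ℚ {α} = ⊤)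
    (hdeg : Module.finrank ℚ K = 3)
    (φ ψ : K →+* ℂ) (hφ : ∀ x, (φ x).im = 0) (hψ : (ψ α).im ≠ 0)
    (hΔ : Algebra.discr ℚ ![1, α, α ^ 2] ≠ 0)
    (η : (𝓞 K)ˣ)
    (hfund : ∀ u : (𝓞 K)ˣ, ∃ (ζ : (𝓞 K)ˣ) (m : ℤ), IsOfFinOrder ζ ∧ u = ζ * η ^ m)
    (hη : 1 < ‖φ ((η : 𝓞 K) : K)‖)
    (ξ : K) (k : ℝ) (hk : 0 < k) (hkξ : k = |(Algebra.norm ℚ ξ : ℝ)|) :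
    ∃ ε : (𝓞 K)ˣ,
      ‖φ (ξ * ((ε : 𝓞 K) : K)) * ((starRingEnd ℂ) (ψ α) - ψ α)‖ ≤
          (k * ‖φ ((η : 𝓞 K) : K)‖) ^ ((1 : ℝ) / 3) *
            |((Algebra.discr ℚ ![1, α, α ^ 2] : ℚ) : ℝ)| ^ ((1 : ℝ) / 6) ∧
      ‖ψ (ξ * ((ε : 𝓞 K) : K)) * (φ α - (starRingEnd ℂ) (ψ α))‖ ≤
          (k * ‖φ ((η : 𝓞 K) : K)‖) ^ ((1 : ℝ) / 3) *
            |((Algebra.discr ℚ ![1, α, α ^ 2] : ℚ) : ℝ)| ^ ((1 : ℝ) / 6) ∧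
      ‖(starRingEnd ℂ) (ψ (ξ * ((ε : 𝓞 K) : K))) * (ψ α - φ α)‖ ≤
          (k * ‖φ ((η : 𝓞 K) : K)‖) ^ ((1 : ℝ) / 3) *
            |((Algebra.discr ℚ ![1, α, α ^ 2] : ℚ) : ℝ)| ^ ((1 : ℝ) / 6) := by
  classical
  set ψ' : K →+* ℂ := (starRingEnd ℂ).comp ψ with hψ'def
  have him : ∀ x : K, ψ' x = (starRingEnd ℂ) (ψ x) := fun x => rfl
  have hφψ : φ ≠ ψ := by
    intro h; exact hψ (by rw [← h]; exact hφ α)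
  have hφψ' : φ ≠ ψ' := by
    intro h
    apply hψ
    have h2 : (φ α).im = (ψ' α).im := by rw [h]
    rw [hφ α, him, Complex.conj_im] at h2
    linarith
  have hψψ' : ψ ≠ ψ' := by
    intro h
    apply hψ
    have h2 : (ψ α).im = (ψ' α).im := by rw [← h]
    rw [him, Complex.conj_im] at h2
    linarith
  have hcard : Fintype.card (K →+* ℂ) = 3 := by
    rw [NumberField.Embeddings.card K ℂ, hdeg]
  have huniv : (Finset.univ : Finset (K →+* ℂ)) = {φ, ψ, ψ'} := by
    symm
    apply Finset.eq_univ_of_card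
    rw [hcard, Finset.card_insert_of_notMem (by simp [hφψ, hφψ']),
      Finset.card_insert_of_notMem (by simp [hψψ']), Finset.card_singleton]
  have hprodC : ∀ x : K, ((Algebra.norm ℚ x : ℚ) : ℂ) = φ x * (ψ x * ψ' x) := by
    intro x
    have h1 := Algebra.norm_eq_prod_embeddings ℚ ℂ x
    rw [← Fintype.prod_equiv (RingHom.equivRatAlgHom K ℂ) (fun f : K →+* ℂ => f x)
      (fun σ : K →ₐ[ℚ] ℂ => σ x) (fun _ => rfl)] at h1
    rw [huniv, Finset.prod_insert (by simp [hφψ, hφψ']),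
      Finset.prod_insert (by simp [hψψ']), Finset.prod_singleton] at h1
    rw [← h1, eq_ratCast]
  have hprodR : ∀ x : K, ‖φ x‖ * ‖ψ x‖ ^ 2 = |((Algebra.norm ℚ x : ℚ) : ℝ)| := by
    intro x
    have h2 : ‖((Algebra.norm ℚ x : ℚ) : ℂ)‖ = |((Algebra.norm ℚ x : ℚ) : ℝ)| := by
      rw [show ((Algebra.norm ℚ x : ℚ) : ℂ) = (((Algebra.norm ℚ x : ℚ) : ℝ) : ℂ) by push_cast; ring,
        Complex.norm_real, Real.norm_eq_abs]
    rw [← h2, hprodC x, norm_mul, norm_mul, him, RCLike.norm_conj]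
    ring
  -- norms of ξ and η
  have hk1 : ‖φ ξ‖ * ‖ψ ξ‖ ^ 2 = k := by rw [hprodR ξ]; exact hkξ.symm
  have hNη : |(Algebra.norm ℚ ((η : 𝓞 K) : K))| = 1 := by
    have h := NumberField.isUnit_iff_norm.mp η.isUnit
    rwa [RingOfIntegers.coe_norm] at h
  have hη1 : ‖φ ((η : 𝓞 K) : K)‖ * ‖ψ ((η : 𝓞 K) : K)‖ ^ 2 = 1 := by
    rw [hprodR, ← Rat.cast_abs, hNη, Rat.cast_one]
  have hφξ : 0 < ‖φ ξ‖ := by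
    nlinarith [norm_nonneg (φ ξ), norm_nonneg (ψ ξ), sq_nonneg ‖ψ ξ‖]
  have hψξ : 0 < ‖ψ ξ‖ := by
    rcases eq_or_lt_of_le (norm_nonneg (ψ ξ)) with h | h
    · exfalso; rw [← h] at hk1; simp at hk1; linarith
    · exact h
  -- algebra homs
  have hcardA : Fintype.card (K →ₐ[ℚ] ℂ) = 3 := by
    rw [← Fintype.card_congr (RingHom.equivRatAlgHom K ℂ : (K →+* ℂ) ≃ (K →ₐ[ℚ] ℂ)), hcard]
  have htR : ∀ f g : K →+* ℂ, f.toRatAlgHom = g.toRatAlgHom → f = g := by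
    intro f g h
    have h2 := congrArg AlgHom.toRingHom h
    simpa using h2
  set v : Fin 3 → (K →ₐ[ℚ] ℂ) := ![φ.toRatAlgHom, ψ.toRatAlgHom, ψ'.toRatAlgHom] with hv
  have hvinj : Function.Injective v := by
    have w01 : v 0 ≠ v 1 := fun h => hφψ (htR _ _ h)
    have w02 : v 0 ≠ v 2 := fun h => hφψ' (htR _ _ h)
    have w12 : v 1 ≠ v 2 := fun h => hψψ' (htR _ _ h)
    intro i j hij
    fin_cases i <;> fin_cases j <;>
      first
      | rfl
      | exact absurd hij w01
      | exact absurd hij w02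
      | exact absurd hij w12
      | exact absurd hij.symm w01
      | exact absurd hij.symm w02
      | exact absurd hij.symm w12
  have hvbij : Function.Bijective v :=
    (Fintype.bijective_iff_injective_and_card v).2 ⟨hvinj, by rw [hcardA, Fintype.card_fin]⟩
  set eA : Fin 3 ≃ (K →ₐ[ℚ] ℂ) := Equiv.ofBijective v hvbij with heA
  -- discriminant
  have hdet : (Algebra.embeddingsMatrixReindex ℚ ℂ ![1, α, α ^ 2] eA).det =
      (ψ α - φ α) * (ψ' α - φ α) * (ψ' α - ψ α) := by
    have E : ∀ (i j : Fin 3),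
        Algebra.embeddingsMatrixReindex ℚ ℂ ![1, α, α ^ 2] eA i j = v j (![1, α, α ^ 2] i) :=
      fun i j => rfl
    rw [Matrix.det_fin_three]
    simp only [E, hv, Matrix.cons_val_zero, Matrix.cons_val_one, Matrix.head_cons,
      Matrix.cons_val_two, Matrix.tail_cons, map_one, map_pow]
    have ha : ∀ (f : K →+* ℂ) (x : K), f.toRatAlgHom x = f x := fun _ _ => rfl
    simp only [ha]
    ring
  have hΔC : ((Algebra.discr ℚ ![1, α, α ^ 2] : ℚ) : ℂ) =
      ((ψ α - φ α) * (ψ' α - φ α) * (ψ' α - ψ α)) ^ 2 := by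
    rw [← hdet, ← Algebra.discr_eq_det_embeddingsMatrixReindex_pow_two ℚ ℂ ![1, α, α ^ 2] eA,
      eq_ratCast]
  -- real quantities
  set A : ℝ := ‖(starRingEnd ℂ) (ψ α) - ψ α‖ with hA
  set Bc : ℝ := ‖φ α - (starRingEnd ℂ) (ψ α)‖ with hBc
  set C : ℝ := ‖ψ α - φ α‖ with hC
  have hBcC : Bc = C := by
    rw [hBc, hC, show φ α - (starRingEnd ℂ) (ψ α) = (starRingEnd ℂ) (φ α - ψ α) by
      rw [map_sub, Complex.conj_eq_iff_im.mpr (hφ α)], RCLike.norm_conj, norm_sub_rev]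
  have hA0 : 0 < A := by
    rw [hA, norm_pos_iff]
    intro h
    have h2 := congrArg Complex.im h
    rw [Complex.sub_im, Complex.conj_im, Complex.zero_im] at h2
    exact hψ (by linarith)
  have hC0 : 0 < C := by
    rw [hC, norm_pos_iff]
    intro h
    have h2 := congrArg Complex.im h
    rw [Complex.sub_im, Complex.zero_im, hφ α] at h2
    exact hψ (by linarith)
  have hBc0 : 0 < Bc := hBcC ▸ hC0
  set P : ℝ := A * Bc * C with hP
  have hP0 : 0 < P := mul_pos (mul_pos hA0 hBc0) hC0
  have hΔR : |((Algebra.discr ℚ ![1, α, α ^ 2] : ℚ) : ℝ)| = P ^ 2 := by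
    have h1 : ‖((Algebra.discr ℚ ![1, α, α ^ 2] : ℚ) : ℂ)‖ =
        |((Algebra.discr ℚ ![1, α, α ^ 2] : ℚ) : ℝ)| := by
      rw [show ((Algebra.discr ℚ ![1, α, α ^ 2] : ℚ) : ℂ)
          = (((Algebra.discr ℚ ![1, α, α ^ 2] : ℚ) : ℝ) : ℂ) by push_cast; ring,
        Complex.norm_real, Real.norm_eq_abs]
    rw [← h1, hΔC, norm_pow, norm_mul, norm_mul]
    rw [hP, hA, hBc, hC]
    rw [show ‖ψ' α - φ α‖ = ‖φ α - (starRingEnd ℂ) (ψ α)‖ by rw [him, norm_sub_rev],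
      show ‖ψ' α - ψ α‖ = ‖(starRingEnd ℂ) (ψ α) - ψ α‖ by rw [him]]
    ring
  -- unit norms under powers
  have hmap : ∀ (f : K →+* ℂ) (m : ℤ), ‖f (((η ^ m : (𝓞 K)ˣ) : 𝓞 K) : K)‖
      = ‖f ((η : 𝓞 K) : K)‖ ^ m := by
    intro f m
    have h1 : f (((η ^ m : (𝓞 K)ˣ) : 𝓞 K) : K)
        = ((Units.map ((f.comp (algebraMap (𝓞 K) K)).toMonoidHom) η ^ m : ℂˣ) : ℂ) := by
      rw [← map_zpow]; rfl
    rw [h1, Units.val_zpow_eq_zpow_val, norm_zpow]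
    rfl
  set t : ℝ := ‖φ ((η : 𝓞 K) : K)‖ with ht
  set s : ℝ := ‖ψ ((η : 𝓞 K) : K)‖ with hs
  have ht0 : (0 : ℝ) < t := lt_trans one_pos hη
  have hs0 : (0 : ℝ) < s := by
    rcases eq_or_lt_of_le (norm_nonneg (ψ ((η : 𝓞 K) : K))) with h | h
    · exfalso; rw [hs, ← h] at hη1; simp at hη1
    · exact h
  have hst : s ^ 2 = t⁻¹ := by
    have h1 : s ^ 2 * t = 1 := by rw [mul_comm]; exact hη1
    exact eq_inv_of_mul_eq_one_left h1
  -- the bound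
  set Dr : ℝ := |((Algebra.discr ℚ ![1, α, α ^ 2] : ℚ) : ℝ)| with hDr
  set B : ℝ := (k * t) ^ ((1 : ℝ) / 3) * Dr ^ ((1 : ℝ) / 6) with hB
  have hDr0 : 0 < Dr := by rw [hΔR]; exact pow_pos hP0 2
  have hB0 : 0 < B :=
    mul_pos (Real.rpow_pos_of_pos (mul_pos hk ht0) _) (Real.rpow_pos_of_pos hDr0 _)
  have e1 : (P ^ 2 : ℝ) ^ ((1 : ℝ) / 6) = P ^ ((1 : ℝ) / 3) := by
    rw [← Real.rpow_natCast P 2, ← Real.rpow_mul hP0.le]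
    norm_num
  have e2 : (k * t * P) ^ ((1 : ℝ) / 3) = (k * t) ^ ((1 : ℝ) / 3) * P ^ ((1 : ℝ) / 3) :=
    Real.mul_rpow (mul_pos hk ht0).le hP0.le
  have e3 : B = (k * t * P) ^ ((1 : ℝ) / 3) := by rw [hB, hΔR, e1, e2]
  have hB3 : B ^ 3 = k * t * P := by
    rw [e3, ← Real.rpow_natCast ((k * t * P) ^ ((1 : ℝ) / 3)) 3,
      ← Real.rpow_mul (mul_pos (mul_pos hk ht0) hP0).le]
    rw [show ((1 : ℝ) / 3) * ((3 : ℕ) : ℝ) = 1 by norm_num, Real.rpow_one]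
  set X₀ : ℝ := ‖φ ξ‖ * A with hX₀
  set Y₀ : ℝ := ‖ψ ξ‖ * Bc with hY₀
  have hX₀0 : 0 < X₀ := mul_pos hφξ hA0
  have hY₀0 : 0 < Y₀ := mul_pos hψξ hBc0
  have hXY : X₀ * Y₀ ^ 2 = k * P := by
    rw [hX₀, hY₀, hP, ← hk1, hBcC]
    ring
  -- choice of m
  set m : ℤ := ⌊Real.logb t (B / X₀)⌋ with hm
  set T : ℝ := t ^ ((m : ℝ)) with hT
  have hT0 : 0 < T := Real.rpow_pos_of_pos ht0 _
  have hrl : t ^ Real.logb t (B / X₀) = B / X₀ :=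
    Real.rpow_logb ht0 (ne_of_gt hη) (div_pos hB0 hX₀0)
  have hm1 : X₀ * T ≤ B := by
    have h1 : T ≤ B / X₀ := by
      rw [← hrl]
      exact Real.rpow_le_rpow_of_exponent_le hη.le (Int.floor_le _)
    calc X₀ * T ≤ X₀ * (B / X₀) := by
          exact mul_le_mul_of_nonneg_left h1 hX₀0.le
      _ = B := by field_simp
  have hm2 : B ≤ X₀ * T * t := by
    have h1 : B / X₀ ≤ t ^ ((m : ℝ) + 1) := by
      rw [← hrl]
      exact (Real.rpow_le_rpow_left_iff hη).2 (Int.lt_floor_add_one _).le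
    have h2 : t ^ ((m : ℝ) + 1) = T * t := by
      rw [hT, Real.rpow_add ht0, Real.rpow_one]
    rw [h2] at h1
    calc B = X₀ * (B / X₀) := by field_simp
      _ ≤ X₀ * (T * t) := mul_le_mul_of_nonneg_left h1 hX₀0.le
      _ = X₀ * T * t := by ring
  -- the second bound
  have hS2 : (s ^ ((m : ℝ))) ^ 2 = T⁻¹ := by
    rw [← Real.rpow_natCast (s ^ ((m : ℝ))) 2, ← Real.rpow_mul hs0.le, mul_comm,
      Real.rpow_mul hs0.le, Real.rpow_natCast, hst, Real.inv_rpow ht0.le]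
  have hYS : Y₀ * s ^ ((m : ℝ)) ≤ B := by
    have hS0 : 0 < s ^ ((m : ℝ)) := Real.rpow_pos_of_pos hs0 _
    have h1 : B * Y₀ ^ 2 ≤ X₀ * T * t * Y₀ ^ 2 :=
      mul_le_mul_of_nonneg_right hm2 (sq_nonneg _)
    have h2 : X₀ * T * t * Y₀ ^ 2 = T * t * (X₀ * Y₀ ^ 2) := by ring
    rw [h2, hXY] at h1
    have h3 : T * t * (k * P) = T * B ^ 3 := by rw [hB3]; ring
    rw [h3] at h1
    have h4 : Y₀ ^ 2 ≤ T * B ^ 2 := by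
      have := (mul_le_mul_iff_right₀ hB0).mp (by linarith [h1] : B * Y₀ ^ 2 ≤ B * (T * B ^ 2))
      exact this
    have h5 : (Y₀ * s ^ ((m : ℝ))) ^ 2 ≤ B ^ 2 := by
      rw [mul_pow, hS2]
      calc Y₀ ^ 2 * T⁻¹ ≤ T * B ^ 2 * T⁻¹ := by
            exact mul_le_mul_of_nonneg_right h4 (inv_nonneg.mpr hT0.le)
        _ = B ^ 2 := by field_simp
    exact (pow_le_pow_iff_left₀ (mul_pos hY₀0 hS0).le hB0.le two_ne_zero).mp h5
  -- conclusion
  refine ⟨η ^ m, ?_, ?_, ?_⟩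
  · rw [map_mul, norm_mul, norm_mul, hmap φ m]
    rw [show ‖φ ((η : 𝓞 K) : K)‖ ^ m = T by rw [hT, Real.rpow_intCast]]
    calc ‖φ ξ‖ * T * A = X₀ * T := by rw [hX₀]; ring
      _ ≤ B := hm1
  · rw [map_mul, norm_mul, norm_mul, hmap ψ m]
    rw [show ‖ψ ((η : 𝓞 K) : K)‖ ^ m = s ^ ((m : ℝ)) by rw [Real.rpow_intCast]]
    calc ‖ψ ξ‖ * s ^ ((m : ℝ)) * Bc = Y₀ * s ^ ((m : ℝ)) := by rw [hY₀]; ring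
      _ ≤ B := hYS
  · rw [norm_mul, RCLike.norm_conj, map_mul, norm_mul, hmap ψ m]
    rw [show ‖ψ ((η : 𝓞 K) : K)‖ ^ m = s ^ ((m : ℝ)) by rw [Real.rpow_intCast]]
    calc ‖ψ ξ‖ * s ^ ((m : ℝ)) * C = Y₀ * s ^ ((m : ℝ)) := by rw [hY₀, hBcC]; ring
      _ ≤ B := hYS
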